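/- For every natural number k and every i with 0 \le i \le k, the number of directed paths in the action graph A_k whose initial vertex is labeled i and whose terminal vertex is labeled k (counting trivial paths when i = k) equals C_i \cdot C_{k-i}, where C_n denotes the nth Catalan number. -/

import Mathlib

/-- Vertices of action graphs: the root (labeled 0), or a vertex created at some
step, recorded together with its label and the path (head and tail of the vertex
sequence) that created it. -/
inductive AGVert : Type
  | root : AGVert
  | node (lbl : ℕ) (head : AGVert) (tail : List AGVert) : AGVert

/-- The label of a vertex. -/
def AGVert.label : AGVert → ℕ
  | .root => 0
  | .node l _ _ => l

/-- `IsPath E a l` says that `a :: l` is the vertex sequence of a directed path in a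
graph with edge set `E` (the trivial path at `a` when `l = []`). -/
def IsPath (E : Set (AGVert × AGVert)) (a : AGVert) (l : List AGVert) : Prop :=
  List.Chain (fun x y => (x, y) ∈ E) a l

/-- The terminal vertex of the path with vertex sequence `a :: l`. -/
def pathLast (a : AGVert) (l : List AGVert) : AGVert :=
  (a :: l).getLast (List.cons_ne_nil a l)

/-- The action graph `A k`, given by its set of vertices together with its set of
(nontrivial, directed) edges.  `A 0` has one vertex (labeled 0) and no nontrivial
edges; `A (k+1)` is obtained from `A k` by adjoining, for each directed path
(including trivial ones) in `A k` whose terminal vertex is labeled `k`, a new vertex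
labeled `k+1` and a new edge from the initial vertex of the path to the new vertex. -/
def actionGraph : ℕ → Set AGVert × Set (AGVert × AGVert)
  | 0 => ({AGVert.root}, ∅)
  | k + 1 =>
    let G := actionGraph k
    (G.1 ∪ { w | ∃ a l, a ∈ G.1 ∧ IsPath G.2 a l ∧ (pathLast a l).label = k ∧
        w = AGVert.node (k + 1) a l },
     G.2 ∪ { e | ∃ a l, a ∈ G.1 ∧ IsPath G.2 a l ∧ (pathLast a l).label = k ∧
        e = (a, AGVert.node (k + 1) a l) })

namespace AGVert

def parent : AGVert → AGVert
  | .root => .root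
  | .node _ a _ => a

def depth : AGVert → ℕ
  | .root => 0
  | .node _ a _ => a.depth + 1

end AGVert

open AGVert

/-- `m`-fold iterated parent (ancestor). -/
def anc (w : AGVert) (m : ℕ) : AGVert := AGVert.parent^[m] w

@[simp] lemma anc_zero (w : AGVert) : anc w 0 = w := rfl

lemma anc_succ (w : AGVert) (m : ℕ) : anc w (m + 1) = anc w.parent m :=
  Function.iterate_succ_apply _ _ _

lemma anc_succ' (w : AGVert) (m : ℕ) : anc w (m + 1) = (anc w m).parent :=
  Function.iterate_succ_apply' _ _ _

lemma anc_add (w : AGVert) (m n : ℕ) : anc w (m + n) = anc (anc w n) m :=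
  Function.iterate_add_apply _ _ _ _

@[simp] lemma anc_root (m : ℕ) : anc .root m = .root := by
  induction m with
  | zero => rfl
  | succ m ih => rw [anc_succ]; exact ih

@[simp] lemma parent_root : AGVert.parent .root = .root := rfl

lemma depth_parent (w : AGVert) (hw : w ≠ .root) : w.parent.depth + 1 = w.depth := by
  cases w with
  | root => exact absurd rfl hw
  | node j a l => rfl

lemma depth_anc {w : AGVert} {m : ℕ} (h : m ≤ w.depth) : (anc w m).depth = w.depth - m := by
  induction m generalizing w with
  | zero => simp
  | succ m ih =>
    cases w with
    | root => simp [AGVert.depth] at h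
    | node j a l =>
      rw [anc_succ]
      have : m ≤ a.depth := by
        have : (AGVert.node j a l).depth = a.depth + 1 := rfl
        omega
      rw [show (AGVert.node j a l).parent = a from rfl, ih this]
      have : (AGVert.node j a l).depth = a.depth + 1 := rfl
      omega

lemma anc_depth (w : AGVert) : anc w w.depth = .root := by
  suffices h : ∀ n w, AGVert.depth w = n → anc w n = .root from h _ w rfl
  intro n
  induction n with
  | zero => intro w hw; cases w with
    | root => rfl
    | node j a l => simp [AGVert.depth] at hw
  | succ n ih =>
    intro w hw
    cases w with
    | root => simp [AGVert.depth] at hw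
    | node j a l =>
      rw [anc_succ]
      exact ih _ (by simpa [AGVert.depth, AGVert.parent] using hw)

lemma anc_ne_root {w : AGVert} {m : ℕ} (h : m < w.depth) : anc w m ≠ .root := by
  intro hc
  have h1 : (anc w m).depth = w.depth - m := depth_anc (le_of_lt h)
  rw [hc] at h1
  simp [AGVert.depth] at h1
  omega

lemma anc_eq_root {w : AGVert} {m : ℕ} (h : w.depth ≤ m) : anc w m = .root := by
  have : m = (m - w.depth) + w.depth := by omega
  rw [this, anc_add, anc_depth, anc_root]

/-- the tail of the vertex sequence of the unique path of length `m` ending at `w` -/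
def pathTail (w : AGVert) (m : ℕ) : List AGVert := ((List.range m).map (anc w)).reverse

@[simp] lemma pathTail_zero (w : AGVert) : pathTail w 0 = [] := rfl

lemma pathTail_succ (w : AGVert) (m : ℕ) :
    pathTail w (m + 1) = anc w m :: pathTail w m := by
  unfold pathTail
  rw [List.range_succ, List.map_append]
  simp

lemma pathTail_succ' (w : AGVert) (m : ℕ) :
    pathTail w (m + 1) = pathTail w.parent m ++ [w] := by
  unfold pathTail
  rw [List.range_succ_eq_map, List.map_cons, List.map_map]
  have : anc w ∘ Nat.succ = anc w.parent := by
    funext n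
    exact anc_succ w n
  rw [this]
  simp

@[simp] lemma pathTail_length (w : AGVert) (m : ℕ) : (pathTail w m).length = m := by
  simp [pathTail]

@[simp] lemma pathLast_nil (a : AGVert) : pathLast a [] = a := rfl

lemma pathLast_append (a b : AGVert) (l : List AGVert) : pathLast a (l ++ [b]) = b := by
  unfold pathLast
  rw [List.getLast_congr _ _ (show a :: (l ++ [b]) = (a :: l) ++ [b] from rfl)]
  exact List.getLast_concat

lemma pathLast_pathTail (w : AGVert) (m : ℕ) (a : AGVert) :
    pathLast a (pathTail w m) = if m = 0 then a else w := by
  cases m with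
  | zero => simp
  | succ m => rw [pathTail_succ', pathLast_append]; simp

/-! ### Structure of the action graphs -/

lemma actionGraph_succ (k : ℕ) :
    actionGraph (k + 1) =
    ((actionGraph k).1 ∪ { w | ∃ a l, a ∈ (actionGraph k).1 ∧ IsPath (actionGraph k).2 a l ∧
        (pathLast a l).label = k ∧ w = AGVert.node (k + 1) a l },
     (actionGraph k).2 ∪ { e | ∃ a l, a ∈ (actionGraph k).1 ∧ IsPath (actionGraph k).2 a l ∧
        (pathLast a l).label = k ∧ e = (a, AGVert.node (k + 1) a l) }) := rfl

lemma root_mem (K : ℕ) : AGVert.root ∈ (actionGraph K).1 := by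
  induction K with
  | zero => exact rfl
  | succ K ih => rw [actionGraph_succ]; exact Or.inl ih

lemma label_le {K : ℕ} {w : AGVert} (h : w ∈ (actionGraph K).1) : w.label ≤ K := by
  induction K with
  | zero => cases h; simp [AGVert.label]
  | succ K ih =>
    rw [actionGraph_succ] at h
    rcases h with h | ⟨a, l, _, _, _, rfl⟩
    · exact (ih h).trans (Nat.le_succ K)
    · exact le_rfl

lemma eq_root_of_label_eq_zero {K : ℕ} {w : AGVert} (h : w ∈ (actionGraph K).1)
    (h0 : w.label = 0) : w = .root := by
  induction K with
  | zero => cases h; rfl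
  | succ K ih =>
    rw [actionGraph_succ] at h
    rcases h with h | ⟨a, l, _, _, _, rfl⟩
    · exact ih h
    · simp [AGVert.label] at h0

lemma edge_char {K : ℕ} {x y : AGVert} :
    (x, y) ∈ (actionGraph K).2 ↔ y ∈ (actionGraph K).1 ∧ y ≠ .root ∧ x = y.parent := by
  induction K with
  | zero =>
    constructor
    · intro h; cases h
    · rintro ⟨h, hy, -⟩; cases h; exact absurd rfl hy
  | succ K ih =>
    rw [actionGraph_succ]
    constructor
    · rintro (h | ⟨a, l, ha, hl, hlb, he⟩)
      · obtain ⟨h1, h2, h3⟩ := ih.1 h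
        exact ⟨Or.inl h1, h2, h3⟩
      · injection he with h1 h2
        subst h1; subst h2
        exact ⟨Or.inr ⟨_, _, ha, hl, hlb, rfl⟩, fun hc => AGVert.noConfusion hc, rfl⟩
    · rintro ⟨h1, h2, rfl⟩
      rcases h1 with h1 | ⟨a, l, ha, hl, hlb, rfl⟩
      · exact Or.inl (ih.2 ⟨h1, h2, rfl⟩)
      · exact Or.inr ⟨a, l, ha, hl, hlb, rfl⟩

lemma parent_mem {K : ℕ} {w : AGVert} (h : w ∈ (actionGraph K).1) :
    w.parent ∈ (actionGraph K).1 := by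
  induction K with
  | zero => cases h; exact rfl
  | succ K ih =>
    rw [actionGraph_succ] at h ⊢
    rcases h with h | ⟨a, l, ha, hl, hlb, rfl⟩
    · exact Or.inl (ih h)
    · exact Or.inl ha

lemma anc_mem {K : ℕ} {w : AGVert} (h : w ∈ (actionGraph K).1) (m : ℕ) :
    anc w m ∈ (actionGraph K).1 := by
  induction m with
  | zero => exact h
  | succ m ih => rw [anc_succ']; exact parent_mem ih

lemma parent_label_lt {K : ℕ} {w : AGVert} (h : w ∈ (actionGraph K).1) (hw : w ≠ .root) :
    w.parent.label < w.label := by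
  induction K with
  | zero => cases h; exact absurd rfl hw
  | succ K ih =>
    rw [actionGraph_succ] at h
    rcases h with h | ⟨a, l, ha, hl, hlb, rfl⟩
    · exact ih h
    · have h1 := label_le ha
      show AGVert.label a < (AGVert.node (K+1) a l).label
      have h2 : (AGVert.node (K+1) a l).label = K + 1 := rfl
      omega

lemma anc_label_le {K : ℕ} {w : AGVert} (h : w ∈ (actionGraph K).1) (m : ℕ) :
    (anc w m).label ≤ w.label := by
  induction m with
  | zero => exact le_rfl
  | succ m ih =>
    rw [anc_succ']
    by_cases hr : anc w m = .root
    · rw [hr]; simpa using (hr ▸ ih)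
    · exact le_of_lt (lt_of_lt_of_le (parent_label_lt (anc_mem h m) hr) ih)

lemma anc_label_lt {K : ℕ} {w : AGVert} (h : w ∈ (actionGraph K).1) (hw : w ≠ .root) (m : ℕ) :
    (anc w (m + 1)).label < w.label := by
  rw [anc_succ]
  calc (anc w.parent m).label ≤ w.parent.label := anc_label_le (parent_mem h) m
  _ < w.label := parent_label_lt h hw

lemma depth_le_label {K : ℕ} {w : AGVert} (h : w ∈ (actionGraph K).1) : w.depth ≤ w.label := by
  induction K generalizing w with
  | zero => cases h; exact le_rfl
  | succ K ih =>
    rw [actionGraph_succ] at h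
    rcases h with h | ⟨a, l, ha, hl, hlb, rfl⟩
    · exact ih h
    · have h1 : a.depth ≤ a.label := ih ha
      have h2 := label_le ha
      show (AGVert.node (K+1) a l).depth ≤ (AGVert.node (K+1) a l).label
      have h3 : (AGVert.node (K+1) a l).label = K + 1 := rfl
      have h4 : (AGVert.node (K+1) a l).depth = a.depth + 1 := rfl
      omega

/-! ### Paths are determined by terminal vertex and length -/

lemma chain_concat {R : AGVert → AGVert → Prop} (a b : AGVert) (l : List AGVert) :
    List.Chain R a (l ++ [b]) ↔ List.Chain R a l ∧ R (pathLast a l) b := by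
  induction l generalizing a with
  | nil => simp [pathLast, List.Chain]
  | cons c l' ih =>
    dsimp only [List.Chain] at ih ⊢
    rw [List.cons_append, List.chain_cons, List.chain_cons, ih c, and_assoc]
    have : pathLast a (c :: l') = pathLast c l' := List.getLast_cons_cons (a := a) (b := c) (l := l')
    rw [this]

lemma isPath_pathTail {K : ℕ} {w : AGVert} (h : w ∈ (actionGraph K).1) {m : ℕ}
    (hm : m ≤ w.depth) : IsPath (actionGraph K).2 (anc w m) (pathTail w m) := by
  induction m with
  | zero => exact List.Chain.nil
  | succ m ih =>
    rw [pathTail_succ, anc_succ']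
    refine List.Chain.cons ?_ (ih (by omega))
    exact edge_char.2 ⟨anc_mem h m, anc_ne_root (by omega), rfl⟩

lemma pathLast_anc_pathTail {w : AGVert} (m : ℕ) :
    pathLast (anc w m) (pathTail w m) = w := by
  rw [pathLast_pathTail]
  cases m with
  | zero => simp
  | succ m => simp

/-- decoding of a path: it is the unique path of its length ending at its terminal vertex -/
lemma path_encode {K : ℕ} {a : AGVert} {l : List AGVert} (ha : a ∈ (actionGraph K).1)
    (hl : IsPath (actionGraph K).2 a l) :
    pathLast a l ∈ (actionGraph K).1 ∧ l.length ≤ (pathLast a l).depth ∧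
      a = anc (pathLast a l) l.length ∧ l = pathTail (pathLast a l) l.length := by
  induction l using List.reverseRecOn with
  | nil => exact ⟨ha, by simp [AGVert.depth, pathLast], by simp, by simp⟩
  | append_singleton l' y ih =>
    rw [IsPath, chain_concat] at hl
    obtain ⟨hc, he⟩ := hl
    obtain ⟨hy, hyr, hpar⟩ := edge_char.1 he
    obtain ⟨h1, h2, h3, h4⟩ := ih hc
    rw [pathLast_append]
    have hd : y.parent.depth + 1 = y.depth := depth_parent y hyr
    have hlen : (l' ++ [y]).length = l'.length + 1 := by simp
    refine ⟨hy, ?_, ?_, ?_⟩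
    · rw [hlen]; rw [hpar] at h2; omega
    · rw [hlen, anc_succ, ← hpar, ← h3]
    · rw [hlen, pathTail_succ', ← hpar, ← h4]

/-! ### Finiteness -/

lemma finite_V (K : ℕ) : (actionGraph K).1.Finite := by
  induction K with
  | zero => exact Set.finite_singleton _
  | succ K ih =>
    rw [actionGraph_succ]
    refine Set.Finite.union ih ?_
    have hsub : { w | ∃ a l, a ∈ (actionGraph K).1 ∧ IsPath (actionGraph K).2 a l ∧
        (pathLast a l).label = K ∧ w = AGVert.node (K + 1) a l } ⊆
        (fun p : AGVert × ℕ => AGVert.node (K+1) (anc p.1 p.2) (pathTail p.1 p.2)) ''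
          ((actionGraph K).1 ×ˢ Set.Iic K) := by
      rintro w ⟨a, l, ha, hl, hlb, rfl⟩
      obtain ⟨h1, h2, h3, h4⟩ := path_encode ha hl
      refine ⟨(pathLast a l, l.length), ⟨h1, ?_⟩, ?_⟩
      · exact le_trans (le_trans h2 (depth_le_label h1)) (label_le h1)
      · simp only
        rw [← h3, ← h4]
    exact Set.Finite.subset (Set.Finite.image _ (Set.Finite.prod ih (Set.finite_Iic K))) hsub

/-! ### Counting sets -/

/-- vertices labeled `K` in `A K` whose `m`-th ancestor exists and is labeled `i`
(equivalently, paths of length `m` from label `i` to label `K`). -/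
def Tset (K i m : ℕ) : Set AGVert :=
  {w | w ∈ (actionGraph K).1 ∧ w.label = K ∧ m ≤ w.depth ∧ (anc w m).label = i}

/-- pairs (vertex labeled `K`, ancestor position `≥ c` with label `i`). -/
def Rset (K i c : ℕ) : Set (AGVert × ℕ) :=
  {p | p.1 ∈ (actionGraph K).1 ∧ p.1.label = K ∧ c ≤ p.2 ∧ p.2 ≤ p.1.depth ∧
    (anc p.1 p.2).label = i}

/-- pairs (vertex labeled `K`, ancestor position) with ancestor label `≤ I`. -/
def Fullset (K I : ℕ) : Set (AGVert × ℕ) :=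
  {p | p.1 ∈ (actionGraph K).1 ∧ p.1.label = K ∧ p.2 ≤ p.1.depth ∧ (anc p.1 p.2).label ≤ I}

lemma Tset_finite (K i m : ℕ) : (Tset K i m).Finite :=
  Set.Finite.subset (finite_V K) (fun w hw => hw.1)

lemma Rset_finite (K i c : ℕ) : (Rset K i c).Finite := by
  refine Set.Finite.subset (Set.Finite.prod (finite_V K) (Set.finite_Iic K)) ?_
  rintro ⟨w, m⟩ ⟨h1, h2, h3, h4, h5⟩
  exact ⟨h1, le_trans h4 (h2 ▸ depth_le_label h1)⟩

lemma Fullset_finite (K I : ℕ) : (Fullset K I).Finite := by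
  refine Set.Finite.subset (Set.Finite.prod (finite_V K) (Set.finite_Iic K)) ?_
  rintro ⟨w, m⟩ ⟨h1, h2, h3, h4⟩
  exact ⟨h1, le_trans h3 (h2 ▸ depth_le_label h1)⟩

lemma Rset_empty {K i c : ℕ} (h : K < c) : Rset K i c = ∅ := by
  ext ⟨w, m⟩
  simp only [Rset, Set.mem_setOf_eq, Set.mem_empty_iff_false, iff_false, not_and]
  intro h1 h2 h3 h4
  have := depth_le_label h1
  omega

lemma Rset_card_succ (K i c : ℕ) :
    (Rset K i c).ncard = (Tset K i c).ncard + (Rset K i (c + 1)).ncard := by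
  have hsplit : Rset K i c = ((fun w => (w, c)) '' Tset K i c) ∪ Rset K i (c + 1) := by
    ext ⟨w, m⟩
    constructor
    · rintro ⟨h1, h2, h3, h4, h5⟩
      rcases eq_or_lt_of_le h3 with h | h
      · exact Or.inl ⟨w, ⟨h1, h2, h ▸ h4, h ▸ h5⟩, by simp only [Prod.mk.injEq]; exact ⟨trivial, h⟩⟩
      · exact Or.inr ⟨h1, h2, h, h4, h5⟩
    · rintro (⟨w', ⟨h1, h2, h3, h4⟩, he⟩ | ⟨h1, h2, h3, h4, h5⟩)
      · injection he with he1 he2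
        subst he1; subst he2
        exact ⟨h1, h2, le_rfl, h3, h4⟩
      · exact ⟨h1, h2, by omega, h4, h5⟩
  rw [hsplit, Set.ncard_union_eq ?_ (Set.Finite.image _ (Tset_finite K i c))
      (Rset_finite K i (c+1)),
    Set.ncard_image_of_injective _ (fun a b hab => (Prod.mk.injEq .. ▸ hab).1)]
  · rw [Set.disjoint_left]
    rintro ⟨w, m⟩ ⟨w', _, he⟩ ⟨_, _, h3, _, _⟩
    injection he with he1 he2
    omega

lemma Rset_card (K i : ℕ) : ∀ c, (Rset K i c).ncard = ∑ j ∈ Finset.Icc c K, (Tset K i j).ncard := by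
  have key : ∀ d c, K + 1 ≤ c + d →
      (Rset K i c).ncard = ∑ j ∈ Finset.Icc c K, (Tset K i j).ncard := by
    intro d
    induction d with
    | zero =>
      intro c hc
      rw [Rset_empty (by omega), Finset.Icc_eq_empty (by omega)]
      simp
    | succ d ih =>
      intro c hc
      by_cases hcK : K < c
      · rw [Rset_empty hcK, Finset.Icc_eq_empty (by omega)]; simp
      · push_neg at hcK
        rw [Rset_card_succ, ih (c + 1) (by omega)]
        rw [show Finset.Icc c K = insert c (Finset.Icc (c+1) K) by
          rw [Finset.Icc_add_one_left_eq_Ioc, Finset.Ioc_insert_left hcK]]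
        rw [Finset.sum_insert (by simp)]
  intro c
  exact key (K + 1) c (by omega)

lemma Fullset_card (K : ℕ) : ∀ I, (Fullset K I).ncard = ∑ i ∈ Finset.Icc 0 I, (Rset K i 0).ncard := by
  intro I
  induction I with
  | zero =>
    have : Fullset K 0 = Rset K 0 0 := by
      ext ⟨w, m⟩
      simp only [Fullset, Rset, Set.mem_setOf_eq, Nat.le_zero, Nat.zero_le, true_and]
    rw [this]; simp
  | succ I ih =>
    have hsplit : Fullset K (I + 1) = Fullset K I ∪ Rset K (I + 1) 0 := by
      ext ⟨w, m⟩
      simp only [Fullset, Rset, Set.mem_setOf_eq, Set.mem_union, Nat.zero_le, true_and]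
      constructor
      · rintro ⟨h1, h2, h3, h4⟩
        rcases eq_or_lt_of_le h4 with h | h
        · exact Or.inr ⟨h1, h2, h3, h⟩
        · exact Or.inl ⟨h1, h2, h3, by omega⟩
      · rintro (⟨h1, h2, h3, h4⟩ | ⟨h1, h2, h3, h4⟩)
        · exact ⟨h1, h2, h3, by omega⟩
        · exact ⟨h1, h2, h3, by omega⟩
    rw [hsplit, Set.ncard_union_eq ?_ (Fullset_finite K I) (Rset_finite K (I+1) 0), ih,
      Finset.sum_Icc_succ_top (by omega)]
    · rw [Set.disjoint_left]
      rintro ⟨w, m⟩ ⟨_, _, _, h4⟩ ⟨_, _, _, h4'⟩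
      omega

/-! ### Bijections -/

lemma Pset_card (K i : ℕ) :
    {p : AGVert × List AGVert | p.1 ∈ (actionGraph K).1 ∧
      IsPath (actionGraph K).2 p.1 p.2 ∧ p.1.label = i ∧
      (pathLast p.1 p.2).label = K}.ncard = (Rset K i 0).ncard := by
  set Pset := {p : AGVert × List AGVert | p.1 ∈ (actionGraph K).1 ∧
      IsPath (actionGraph K).2 p.1 p.2 ∧ p.1.label = i ∧
      (pathLast p.1 p.2).label = K} with hPdef
  set φ : AGVert × List AGVert → AGVert × ℕ := fun p => (pathLast p.1 p.2, p.2.length) with hφ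
  have himg : φ '' Pset = Rset K i 0 := by
    ext ⟨w, m⟩
    constructor
    · rintro ⟨⟨a, l⟩, ⟨hp1, hp2, hp3, hp4⟩, hpe⟩
      obtain ⟨h1, h2, h3, h4⟩ := path_encode hp1 hp2
      injection hpe with he1 he2
      subst he1; subst he2
      exact ⟨h1, hp4, Nat.zero_le _, h2, by rw [← h3]; exact hp3⟩
    · rintro ⟨h1, h2, h3, h4, h5⟩
      refine ⟨(anc w m, pathTail w m), ⟨anc_mem h1 m, isPath_pathTail h1 h4, h5,
        by rw [pathLast_anc_pathTail]; exact h2⟩, ?_⟩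
      simp only [hφ, pathLast_anc_pathTail, pathTail_length]
  have hinj : Set.InjOn φ Pset := by
    rintro ⟨a, l⟩ ⟨ha1, ha2, _, _⟩ ⟨b, t⟩ ⟨hb1, hb2, _, _⟩ he
    obtain ⟨_, _, ha3, ha4⟩ := path_encode ha1 ha2
    obtain ⟨_, _, hb3, hb4⟩ := path_encode hb1 hb2
    injection he with he1 he2
    simp only at he1 he2
    dsimp only at ha3 ha4 hb3 hb4
    refine Prod.ext ?_ ?_ <;> dsimp only
    · rw [ha3, hb3, he1, he2]
    · rw [ha4, hb4, he1, he2]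
  rw [← himg, Set.ncard_image_of_injOn hinj]

lemma Rset_root_card (K : ℕ) : (Rset K 0 0).ncard = (Tset K K 0).ncard := by
  have himg : (fun w => (w, w.depth)) '' Tset K K 0 = Rset K 0 0 := by
    ext ⟨w, m⟩
    constructor
    · rintro ⟨w', ⟨h1, h2, _, _⟩, he⟩
      injection he with he1 he2
      subst he1; subst he2
      exact ⟨h1, h2, Nat.zero_le _, le_rfl, by rw [anc_depth]; rfl⟩
    · rintro ⟨h1, h2, _, h4, h5⟩
      have hroot : anc w m = .root := eq_root_of_label_eq_zero (anc_mem h1 m) h5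
      have h4' : m ≤ w.depth := h4
      have hdm : m = w.depth := by
        rcases lt_or_ge m w.depth with h | h
        · exact absurd hroot (anc_ne_root h)
        · omega
      exact ⟨w, ⟨h1, h2, Nat.zero_le _, h2⟩, by rw [hdm]⟩
  rw [← himg, Set.ncard_image_of_injective _ (fun a b hab => (Prod.mk.injEq .. ▸ hab).1)]

lemma Tset_succ_card (K : ℕ) :
    (Tset (K + 1) (K + 1) 0).ncard = (Fullset K K).ncard := by
  set Ψ : AGVert × ℕ → AGVert := fun p =>
    AGVert.node (K + 1) (anc p.1 p.2) (pathTail p.1 p.2) with hΨ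
  have himg : Ψ '' Fullset K K = Tset (K + 1) (K + 1) 0 := by
    ext v
    constructor
    · rintro ⟨⟨w, m⟩, ⟨h1, h2, h3, _⟩, rfl⟩
      refine ⟨?_, rfl, Nat.zero_le _, rfl⟩
      rw [actionGraph_succ]
      exact Or.inr ⟨anc w m, pathTail w m, anc_mem h1 m, isPath_pathTail h1 h3,
        by rw [pathLast_anc_pathTail]; exact h2, rfl⟩
    · rintro ⟨hv1, hv2, -, -⟩
      rw [actionGraph_succ] at hv1
      rcases hv1 with hv1 | ⟨a, l, ha, hl, hlb, rfl⟩
      · exact absurd (label_le hv1) (by omega)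
      · obtain ⟨h1, h2, h3, h4⟩ := path_encode ha hl
        refine ⟨(pathLast a l, l.length), ⟨h1, hlb, h2, ?_⟩, ?_⟩
        · rw [← h3]; exact label_le ha
        · simp only [hΨ]
          rw [← h3, ← h4]
  have hinj : Set.InjOn Ψ (Fullset K K) := by
    rintro ⟨w, m⟩ ⟨h1, h2, h3, _⟩ ⟨w', m'⟩ ⟨h1', h2', h3', _⟩ he
    simp only [hΨ] at he
    injection he with he0 hea hel
    have hm : m = m' := by
      have := congrArg List.length hel
      simpa using this
    subst hm
    have : w = w' := by
      have e1 := pathLast_anc_pathTail (w := w) m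
      rw [hea, hel, pathLast_anc_pathTail] at e1
      exact e1.symm
    simp [this]
  rw [← himg, Set.ncard_image_of_injOn hinj]

lemma Tset_shift_card (K i m : ℕ) :
    (Tset (K + 1) i (m + 1)).ncard = (Rset K i m).ncard := by
  set Φ : AGVert × ℕ → AGVert := fun p =>
    AGVert.node (K + 1) (anc p.1 (p.2 - m)) (pathTail p.1 (p.2 - m)) with hΦ
  have himg : Φ '' Rset K i m = Tset (K + 1) i (m + 1) := by
    ext v
    constructor
    · rintro ⟨⟨w, j⟩, ⟨h1, h2, h3, h4, h5⟩, rfl⟩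
      have h3' : m ≤ j := h3
      have h4' : j ≤ w.depth := h4
      have hm' : j - m ≤ w.depth := by omega
      have hdv : (AGVert.node (K+1) (anc w (j-m)) (pathTail w (j-m))).depth
          = (anc w (j - m)).depth + 1 := rfl
      refine ⟨?_, rfl, ?_, ?_⟩
      · rw [actionGraph_succ]
        exact Or.inr ⟨anc w (j-m), pathTail w (j-m), anc_mem h1 _, isPath_pathTail h1 hm',
          by rw [pathLast_anc_pathTail]; exact h2, rfl⟩
      · simp only [hΦ]
        rw [hdv, depth_anc hm']
        omega
      · simp only [hΦ]
        rw [anc_succ]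
        have hpar : (AGVert.node (K+1) (anc w (j-m)) (pathTail w (j-m))).parent
            = anc w (j - m) := rfl
        rw [hpar, ← anc_add]
        rw [show m + (j - m) = j by omega]
        exact h5
    · rintro ⟨hv1, hv2, hv3, hv4⟩
      rw [actionGraph_succ] at hv1
      rcases hv1 with hv1 | ⟨a, l, ha, hl, hlb, rfl⟩
      · exact absurd (label_le hv1) (by omega)
      · obtain ⟨h1, h2, h3, h4⟩ := path_encode ha hl
        have hdv : (AGVert.node (K+1) a l).depth = a.depth + 1 := rfl
        have hda : a.depth = (pathLast a l).depth - l.length := by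
          conv_lhs => rw [h3]
          rw [depth_anc h2]
        have hv3' : m + 1 ≤ a.depth + 1 := hdv ▸ hv3
        refine ⟨(pathLast a l, l.length + m), ⟨h1, hlb, by omega,
          show l.length + m ≤ (pathLast a l).depth by omega, ?_⟩, ?_⟩
        · have key : anc (AGVert.node (K+1) a l) (m + 1) = anc (pathLast a l) (l.length + m) := by
            have hpar : (AGVert.node (K+1) a l).parent = a := rfl
            rw [anc_succ, hpar, show l.length + m = m + l.length by omega, anc_add, ← h3]
          rw [show anc (pathLast a l, l.length + m).1 (pathLast a l, l.length + m).2
            = anc (pathLast a l) (l.length + m) from rfl, ← key]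
          exact hv4
        · show AGVert.node (K + 1) (anc (pathLast a l) (l.length + m - m))
              (pathTail (pathLast a l) (l.length + m - m)) = AGVert.node (K+1) a l
          rw [show l.length + m - m = l.length by omega, ← h3, ← h4]
  have hinj : Set.InjOn Φ (Rset K i m) := by
    rintro ⟨w, j⟩ ⟨h1, h2, h3, h4, h5⟩ ⟨w', j'⟩ ⟨h1', h2', h3', h4', h5'⟩ he
    simp only [hΦ] at he
    injection he with he0 hea hel
    have hm : j - m = j' - m := by
      have := congrArg List.length hel
      simpa using this
    have hw : w = w' := by
      have e1 := pathLast_anc_pathTail (w := w) (j - m)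
      rw [hea, hel, pathLast_anc_pathTail] at e1
      exact e1.symm
    have : j = j' := by omega
    simp [hw, this]
  rw [← himg, Set.ncard_image_of_injOn hinj]

lemma Tset_ne_empty {K i : ℕ} (h : i ≠ K) : Tset K i 0 = ∅ := by
  ext w
  simp only [Tset, Set.mem_setOf_eq, Set.mem_empty_iff_false, iff_false, not_and]
  intro _ h2 _
  rw [anc_zero, h2]
  exact fun hc => h hc.symm

lemma Tset_top_succ_empty (K m : ℕ) : Tset (K + 1) (K + 1) (m + 1) = ∅ := by
  ext w
  simp only [Tset, Set.mem_setOf_eq, Set.mem_empty_iff_false, iff_false, not_and]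
  intro h1 h2 _ h4
  have hw : w ≠ .root := by
    intro hc
    rw [hc] at h2
    exact absurd h2 (by simp [AGVert.label])
  have := anc_label_lt h1 hw m
  omega

/-! ### The auxiliary number triangle -/

/-- `gtri n m` is the number of paths between labels of difference `n` and length `m`,
divided by the Catalan factor. -/
def gtri : ℕ → ℕ → ℕ
  | 0, 0 => 1
  | 0, _ + 1 => 0
  | _ + 1, 0 => 0
  | n + 1, m + 1 => ∑ j ∈ Finset.Icc m n, gtri n j

lemma gtri_zero_of_lt : ∀ {n m : ℕ}, n < m → gtri n m = 0 := by
  intro n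
  induction n with
  | zero => intro m hm; match m, hm with | m + 1, _ => rfl
  | succ n ih =>
    intro m hm
    match m, hm with
    | m + 1, hm =>
      show ∑ j ∈ Finset.Icc m n, gtri n j = 0
      rw [Finset.Icc_eq_empty (by omega), Finset.sum_empty]

lemma sum_gtri_cut {n K c : ℕ} (h : n ≤ K) :
    ∑ j ∈ Finset.Icc c K, gtri n j = ∑ j ∈ Finset.Icc c n, gtri n j := by
  refine (Finset.sum_subset (Finset.Icc_subset_Icc_right h) ?_).symm
  intro j hj hj2
  rw [Finset.mem_Icc] at hj hj2
  exact gtri_zero_of_lt (by omega)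

lemma Gsum {n : ℕ} (h : ∀ i ≤ n, ∀ m, (Tset n i m).ncard = catalan i * gtri (n - i) m) :
    ∑ j ∈ Finset.Icc 0 n, gtri n j = catalan n := by
  have h1 : (Tset n n 0).ncard = catalan n := by
    rw [h n le_rfl 0, Nat.sub_self]
    show catalan n * gtri 0 0 = catalan n
    rw [show gtri 0 0 = 1 from rfl, mul_one]
  have h2 := Rset_card n 0 0
  rw [Rset_root_card, h1] at h2
  calc ∑ j ∈ Finset.Icc 0 n, gtri n j
      = ∑ j ∈ Finset.Icc 0 n, (Tset n 0 j).ncard := by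
        refine Finset.sum_congr rfl fun j _ => ?_
        rw [h 0 (Nat.zero_le n) j, catalan_zero, one_mul, Nat.sub_zero]
    _ = catalan n := h2.symm

/-! ### The main induction -/

theorem Tcard : ∀ K i m, i ≤ K → (Tset K i m).ncard = catalan i * gtri (K - i) m := by
  intro K
  induction K using Nat.strong_induction_on with
  | _ K IH =>
    match K with
    | 0 =>
      intro i m hi
      have hi0 : i = 0 := by omega
      subst hi0
      cases m with
      | zero =>
        have : Tset 0 0 0 = {AGVert.root} := by
          ext w
          constructor
          · rintro ⟨h1, -, -, -⟩; exact h1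
          · rintro rfl
            exact ⟨rfl, rfl, le_rfl, rfl⟩
        rw [this, Set.ncard_singleton, Nat.sub_self, catalan_zero,
          show gtri 0 0 = 1 from rfl, mul_one]
      | succ m =>
        have : Tset 0 0 (m + 1) = ∅ := by
          ext w
          simp only [Tset, Set.mem_setOf_eq, Set.mem_empty_iff_false, iff_false, not_and]
          intro h1 _ 
          have : w = .root := h1
          subst this
          intro h3
          exact absurd h3 (by simp [AGVert.depth])
        rw [this, Set.ncard_empty, Nat.sub_zero]
        rw [gtri_zero_of_lt (by omega), mul_zero]
    | K + 1 =>
      intro i m hi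
      rcases Nat.lt_or_ge i (K + 1) with hiK | hiK
      · have hik : i ≤ K := by omega
        cases m with
        | zero =>
          rw [Tset_ne_empty (show i ≠ K + 1 by omega), Set.ncard_empty,
            show K + 1 - i = (K - i) + 1 by omega,
            show gtri (K - i + 1) 0 = 0 from rfl, mul_zero]
        | succ m =>
          rw [Tset_shift_card, Rset_card]
          rw [Finset.sum_congr rfl (fun j _ => IH K (by omega) i j hik), ← Finset.mul_sum]
          congr 1
          rw [sum_gtri_cut (show K - i ≤ K by omega),
            show K + 1 - i = (K - i) + 1 by omega]
          rfl
      · have hieq : i = K + 1 := by omega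
        subst hieq
        rw [Nat.sub_self]
        cases m with
        | succ m =>
          rw [Tset_top_succ_empty, Set.ncard_empty, show gtri 0 (m+1) = 0 from rfl, mul_zero]
        | zero =>
          rw [show gtri 0 0 = 1 from rfl, mul_one, Tset_succ_card, Fullset_card]
          have hterm : ∀ i' ∈ Finset.Icc 0 K, (Rset K i' 0).ncard
              = catalan i' * catalan (K - i') := by
            intro i' hi'
            have hi'K : i' ≤ K := (Finset.mem_Icc.1 hi').2
            rw [Rset_card,
              Finset.sum_congr rfl (fun j _ => IH K (by omega) i' j hi'K), ← Finset.mul_sum,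
              sum_gtri_cut (show K - i' ≤ K by omega),
              Gsum (fun i'' hi'' m' => IH (K - i') (by omega) i'' m' hi'')]
          rw [Finset.sum_congr rfl hterm,
            show Finset.Icc 0 K = Finset.range (K + 1) by
              rw [Finset.range_eq_Ico, Finset.Ico_add_one_right_eq_Icc],
            Finset.sum_range, ← catalan_succ]

/-! ### The theorem -/

/-- For every `0 ≤ i ≤ k`, the number of directed paths in `A k` from a vertex labeled
`i` to a vertex labeled `k` (including trivial paths when `i = k`) is `C i * C (k-i)`. -/
theorem stmt_5 (k i : ℕ) (hik : i ≤ k) :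
    {p : AGVert × List AGVert | p.1 ∈ (actionGraph k).1 ∧
      IsPath (actionGraph k).2 p.1 p.2 ∧ p.1.label = i ∧
      (pathLast p.1 p.2).label = k}.ncard = catalan i * catalan (k - i) := by
  rw [Pset_card, Rset_card,
    Finset.sum_congr rfl (fun j _ => Tcard k i j hik), ← Finset.mul_sum,
    sum_gtri_cut (Nat.sub_le k i),
    Gsum (fun i' hi' m => Tcard (k - i) i' m hi')]
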